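/- Let (a, b) be D-pseudo-bosonic operators ([a,b]f = f on a dense domain D invariant under a, b, a†, b†), and suppose φ_0 ∈ D is nonzero with a φ_0 = 0. Define φ_n = b^n φ_0/√(n!). Then for all n ≥ 1, a φ_n = √n φ_{n-1}, and b φ_n = √(n+1) φ_{n+1} for all n ≥ 0; consequently N φ_n = n φ_n where N = b a. -/

import Mathlib

open scoped InnerProductSpace

/-- For `D`-pseudo-bosonic operators `(a,b)` with vacuum `a φ₀ = 0`,
`φ_n = b^n φ₀ / √(n!)` satisfies the ladder relations `a φ_n = √n φ_{n-1}` (n ≥ 1),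
`b φ_n = √(n+1) φ_{n+1}`, and `N φ_n = n φ_n` with `N = b a`. -/
theorem statement_5
    {H : Type*} [NormedAddCommGroup H] [InnerProductSpace ℂ H]
    (D : Submodule ℂ H) (hD : Dense (D : Set H))
    (a b ad bd : H →ₗ[ℂ] H)
    (hstab : ∀ f ∈ D, a f ∈ D ∧ b f ∈ D ∧ ad f ∈ D ∧ bd f ∈ D)
    (hadja : ∀ f ∈ D, ∀ g ∈ D, ⟪a f, g⟫_ℂ = ⟪f, ad g⟫_ℂ)
    (hadjb : ∀ f ∈ D, ∀ g ∈ D, ⟪b f, g⟫_ℂ = ⟪f, bd g⟫_ℂ)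
    (hcomm : ∀ f ∈ D, a (b f) - b (a f) = f)
    (φ0 : H) (hφ0D : φ0 ∈ D) (hφ0 : φ0 ≠ 0) (hvac : a φ0 = 0)
    (φ : ℕ → H)
    (hφ : ∀ n : ℕ, φ n = ((Real.sqrt n.factorial : ℂ))⁻¹ • (b ^ n) φ0) :
    (∀ n : ℕ, a (φ (n + 1)) = (Real.sqrt (n + 1) : ℂ) • φ n) ∧
    (∀ n : ℕ, b (φ n) = (Real.sqrt (n + 1) : ℂ) • φ (n + 1)) ∧
    (∀ n : ℕ, b (a (φ n)) = (n : ℂ) • φ n) := by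
  -- membership of b^n φ0 in D
  have hmem : ∀ n : ℕ, (b ^ n) φ0 ∈ D := by
    intro n
    induction n with
    | zero => simpa using hφ0D
    | succ k ih =>
      rw [pow_succ', Module.End.mul_apply]
      exact ((hstab _ ih).2.1)
  -- key: a (b^{n+1} φ0) = (n+1) • b^n φ0
  have key : ∀ n : ℕ, a ((b ^ (n + 1)) φ0) = ((n : ℂ) + 1) • (b ^ n) φ0 := by
    intro n
    induction n with
    | zero =>
      have h := hcomm φ0 hφ0D
      simp only [hvac, map_zero, sub_zero] at h
      simpa [pow_succ, hvac] using h
    | succ k ih =>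
      have hb : (b ^ (k + 1 + 1)) φ0 = b ((b ^ (k + 1)) φ0) := by
        rw [pow_succ', Module.End.mul_apply]
      have h := hcomm ((b ^ (k + 1)) φ0) (hmem (k + 1))
      rw [ih] at h
      have : a (b ((b ^ (k + 1)) φ0)) =
          b (((k : ℂ) + 1) • (b ^ k) φ0) + (b ^ (k + 1)) φ0 := by
        linear_combination (norm := module) h
      rw [hb, this, map_smul]
      have hbk : b ((b ^ k) φ0) = (b ^ (k + 1)) φ0 := by
        rw [pow_succ', Module.End.mul_apply]
      rw [hbk]
      push_cast
      module
  -- sqrt facts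
  have hsq : ∀ n : ℕ, (Real.sqrt (n + 1).factorial : ℂ) =
      (Real.sqrt (n + 1) : ℂ) * (Real.sqrt n.factorial : ℂ) := by
    intro n
    rw [Nat.factorial_succ]
    push_cast
    rw [Real.sqrt_mul (by positivity)]
    push_cast
    ring
  have hne : ∀ n : ℕ, (Real.sqrt n.factorial : ℂ) ≠ 0 := by
    intro n
    have : (0:ℝ) < Real.sqrt n.factorial :=
      Real.sqrt_pos.mpr (by exact_mod_cast n.factorial_pos)
    simp [this.ne']
  have hne1 : ∀ n : ℕ, ((Real.sqrt (n + 1) : ℝ) : ℂ) ≠ 0 := by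
    intro n
    simp only [ne_eq, Complex.ofReal_eq_zero]
    positivity
  have hsqmul : ∀ n : ℕ, (Real.sqrt (n + 1) : ℂ) * (Real.sqrt (n + 1) : ℂ) = (n : ℂ) + 1 := by
    intro n
    rw [← Complex.ofReal_mul, Real.mul_self_sqrt (by positivity)]
    push_cast; ring
  have hco : ∀ (s f : ℂ), s ≠ 0 → f ≠ 0 → (s * f)⁻¹ * (s * s) = s * f⁻¹ := by
    intro s f hs hf
    field_simp
  -- first claim
  have ha : ∀ n : ℕ, a (φ (n + 1)) = (Real.sqrt (n + 1) : ℂ) • φ n := by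
    intro n
    rw [hφ (n + 1), hφ n, map_smul, key n, smul_smul, smul_smul, hsq n]
    congr 1
    rw [← hsqmul n]
    exact hco _ _ (hne1 n) (hne n)
  have hb : ∀ n : ℕ, b (φ n) = (Real.sqrt (n + 1) : ℂ) • φ (n + 1) := by
    intro n
    rw [hφ n, hφ (n + 1), map_smul, smul_smul, hsq n]
    have : b ((b ^ n) φ0) = (b ^ (n + 1)) φ0 := by rw [pow_succ', Module.End.mul_apply]
    rw [this]
    congr 1
    rw [mul_inv, ← mul_assoc, mul_inv_cancel₀ (hne1 n), one_mul]
  refine ⟨ha, hb, ?_⟩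
  intro n
  cases n with
  | zero =>
    rw [hφ 0]
    simp [hvac]
  | succ k =>
    rw [ha k, map_smul, hb k, smul_smul, hsqmul k]
    push_cast; ring_nf
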